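/- Let B̂ ∈ ℝ, v̂ > 0, v̂_P > 0, and define L̂(u) := Φ((u − B̂)/v̂), Ĥ(u) := Φ(m̂⁻¹Φ⁻¹(u)) with m̂ := v̂_P/v̂. Then for every α ∈ (0,1), L̂⁻¹(Ĥ⁻¹(α)) = B̂ + v̂_P · z_α, where z_α := Φ⁻¹(α). Consequently the interval [ĝ − a·L̂⁻¹(Ĥ⁻¹(1−α/2)), ĝ − a·L̂⁻¹(Ĥ⁻¹(α/2))] equals [(ĝ − a·B̂) − a·v̂_P·z_{1−α/2}, (ĝ − a·B̂) + a·v̂_P·z_{1−α/2}] for any a > 0 and ĝ ∈ ℝ. -/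

import Mathlib

open MeasureTheory ProbabilityTheory

/-- The standard normal cumulative distribution function. -/
noncomputable def stdNormalCDF (x : ℝ) : ℝ := (gaussianReal 0 1 (Set.Iic x)).toReal

lemma stdNormalCDF_neg (x : ℝ) : stdNormalCDF (-x) = 1 - stdNormalCDF x := by
  have hmap : (gaussianReal 0 1).map (fun y : ℝ => (-1 : ℝ) * y) = gaussianReal 0 1 := by
    have := gaussianReal_map_const_mul (μ := 0) (v := 1) (-1 : ℝ)
    simpa using this
  have h1 : gaussianReal 0 1 (Set.Iic (-x)) = gaussianReal 0 1 (Set.Ici x) := by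
    conv_lhs => rw [← hmap]
    rw [Measure.map_apply (by fun_prop) measurableSet_Iic]
    congr 1
    ext y
    simp only [Set.mem_preimage, Set.mem_Iic, Set.mem_Ici]
    constructor <;> intro h <;> linarith
  have hsing : gaussianReal 0 1 ({x} : Set ℝ) = 0 :=
    gaussianReal_absolutelyContinuous 0 one_ne_zero (measure_singleton x)
  have h2 : gaussianReal 0 1 (Set.Ici x) = gaussianReal 0 1 (Set.Ioi x) := by
    refine (measure_eq_measure_of_null_diff Set.Ioi_subset_Ici_self ?_).symm
    refine measure_mono_null ?_ hsing
    intro y hy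
    simp only [Set.mem_diff, Set.mem_Ici, Set.mem_Ioi, not_lt] at hy
    simp [le_antisymm hy.2 hy.1]
  have h3 : gaussianReal 0 1 (Set.Ioi x) = 1 - gaussianReal 0 1 (Set.Iic x) := by
    rw [← Set.compl_Iic, measure_compl measurableSet_Iic (measure_ne_top _ _), measure_univ]
  have hle : gaussianReal 0 1 (Set.Iic x) ≤ 1 := prob_le_one
  unfold stdNormalCDF
  rw [h1, h2, h3, ENNReal.toReal_sub_of_le hle ENNReal.one_ne_top, ENNReal.toReal_one]

/-- Exact equality of the prepivoted bootstrap interval and the RBC-type interval in the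
Gaussian case: `L̂⁻¹(Ĥ⁻¹(α)) = B̂ + v̂_P z_α`, and hence the equal-tailed prepivoted interval
coincides with the bias-corrected interval with adjusted standard error. -/
theorem prepivoted_interval_eq_rbc
    (Φinv : ℝ → ℝ)
    (hΦinv₁ : ∀ u ∈ Set.Ioo (0 : ℝ) 1, stdNormalCDF (Φinv u) = u)
    (hΦinv₂ : ∀ x : ℝ, Φinv (stdNormalCDF x) = x)
    (Bhat vhat vhatP : ℝ) (hv : 0 < vhat) (hvP : 0 < vhatP)
    (mhat : ℝ) (hm : mhat = vhatP / vhat)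
    (L H : ℝ → ℝ)
    (hL : ∀ u : ℝ, L u = stdNormalCDF ((u - Bhat) / vhat))
    (hH : ∀ u : ℝ, H u = stdNormalCDF (mhat⁻¹ * Φinv u))
    (Linv Hinv : ℝ → ℝ)
    (hLinv : ∀ x : ℝ, Linv (L x) = x)
    (hHinv : ∀ u ∈ Set.Ioo (0 : ℝ) 1, H (Hinv u) = u ∧ Hinv u ∈ Set.Ioo (0 : ℝ) 1)
    (α : ℝ) (hα : α ∈ Set.Ioo (0 : ℝ) 1) :
    Linv (Hinv α) = Bhat + vhatP * Φinv α ∧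
    ∀ a : ℝ, 0 < a → ∀ ghat : ℝ,
      Set.Icc (ghat - a * Linv (Hinv (1 - α / 2))) (ghat - a * Linv (Hinv (α / 2)))
        = Set.Icc ((ghat - a * Bhat) - a * vhatP * Φinv (1 - α / 2))
                  ((ghat - a * Bhat) + a * vhatP * Φinv (1 - α / 2)) := by
  have hm0 : mhat ≠ 0 := by rw [hm]; positivity
  have key : ∀ u ∈ Set.Ioo (0 : ℝ) 1, Linv (Hinv u) = Bhat + vhatP * Φinv u := by
    intro u hu
    obtain ⟨hHH, hmem⟩ := hHinv u hu
    -- From H (Hinv u) = u, derive Φinv (Hinv u) = mhat * Φinv u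
    have e1 : stdNormalCDF (mhat⁻¹ * Φinv (Hinv u)) = stdNormalCDF (Φinv u) := by
      rw [← hH, hHH, hΦinv₁ u hu]
    have e2 : mhat⁻¹ * Φinv (Hinv u) = Φinv u := by
      have := congrArg Φinv e1
      rwa [hΦinv₂, hΦinv₂] at this
    have e3 : Φinv (Hinv u) = mhat * Φinv u := by
      field_simp at e2 ⊢
      linarith [e2]
    have e4 : Hinv u = stdNormalCDF (mhat * Φinv u) := by
      rw [← e3, hΦinv₁ _ hmem]
    have e5 : L (Bhat + vhatP * Φinv u) = Hinv u := by
      rw [hL, e4]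
      congr 1
      rw [hm]
      field_simp
      ring
    rw [← e5, hLinv]
  have h2 : (α / 2) ∈ Set.Ioo (0 : ℝ) 1 := ⟨by linarith [hα.1], by linarith [hα.2]⟩
  have h3 : (1 - α / 2) ∈ Set.Ioo (0 : ℝ) 1 := ⟨by linarith [hα.2], by linarith [hα.1]⟩
  have hsym : Φinv (α / 2) = -Φinv (1 - α / 2) := by
    have : stdNormalCDF (-(Φinv (1 - α / 2))) = α / 2 := by
      rw [stdNormalCDF_neg, hΦinv₁ _ h3]; ring
    calc Φinv (α / 2) = Φinv (stdNormalCDF (-(Φinv (1 - α / 2)))) := by rw [this]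
      _ = -Φinv (1 - α / 2) := hΦinv₂ _
  refine ⟨key α hα, fun a ha ghat => ?_⟩
  rw [key _ h2, key _ h3, hsym]
  have e6 : ghat - a * (Bhat + vhatP * -Φinv (1 - α / 2))
      = ghat - a * Bhat + a * vhatP * Φinv (1 - α / 2) := by ring
  have e7 : ghat - a * (Bhat + vhatP * Φinv (1 - α / 2))
      = ghat - a * Bhat - a * vhatP * Φinv (1 - α / 2) := by ring
  rw [e6, e7]
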